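/- Let f ∈ C^n(ℝ) and define the divided differences recursively by f^{[0]} = f and f^{[n]}(λ₀,…,λₙ) = (f^{[n-1]}(λ₀,…,λ_{n-1}) - f^{[n-1]}(λ₁,…,λₙ))/(λ₀ - λₙ) for λ₀ ≠ λₙ, extended continuously. Suppose f^{(n)}(λ) = ∫_ℝ e^{ixλ} dμ(x) for a finite complex measure μ. Then for all λ₀,…,λₙ ∈ ℝ, f^{[n]}(λ₀,…,λₙ) = ∫_ℝ ∫_{Δₙ} e^{i s₀ x λ₀} ⋯ e^{i sₙ x λₙ} ds dμ(x), where Δₙ = {s ∈ ℝ_{≥0}^{n+1} : s₀ + ⋯ + sₙ = 1} carries the flat measure of total mass 1/n!. -/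

import Mathlib

open Complex MeasureTheory Finset

namespace DDF

/-- The parametrizing simplex. -/
def T (m : ℕ) : Set (Fin m → ℝ) := {t | (∀ i, 0 ≤ t i) ∧ ∑ i, t i ≤ 1}

/-- The barycentric argument. -/
def arg {m : ℕ} (lam : Fin (m + 1) → ℝ) (t : Fin m → ℝ) : ℝ :=
  (1 - ∑ i, t i) * lam 0 + ∑ i, t i * lam i.succ

lemma measurableSet_T (m : ℕ) : MeasurableSet (T m) := by
  have h1 : MeasurableSet {t : Fin m → ℝ | ∀ i, 0 ≤ t i} := by
    rw [Set.setOf_forall]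
    exact MeasurableSet.iInter fun i => measurableSet_le measurable_const (measurable_pi_apply i)
  have h2 : MeasurableSet {t : Fin m → ℝ | ∑ i, t i ≤ 1} :=
    measurableSet_le (Finset.measurable_sum _ fun i _ => measurable_pi_apply i) measurable_const
  exact h1.inter h2

lemma isCompact_T (m : ℕ) : IsCompact (T m) := by
  have hsub : T m ⊆ Set.Icc (0 : Fin m → ℝ) 1 := by
    rintro t ⟨h0, h1⟩
    constructor
    · intro i; exact h0 i
    · intro i
      calc t i ≤ ∑ j, t j := Finset.single_le_sum (fun j _ => h0 j) (Finset.mem_univ i)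
        _ ≤ 1 := h1
  have hclosed : IsClosed (T m) := by
    have h1 : IsClosed {t : Fin m → ℝ | ∀ i, 0 ≤ t i} := by
      rw [Set.setOf_forall]
      exact isClosed_iInter fun i => isClosed_le continuous_const (continuous_apply i)
    have h2 : IsClosed {t : Fin m → ℝ | ∑ i, t i ≤ 1} :=
      isClosed_le (by fun_prop) continuous_const
    exact h1.inter h2
  exact (isCompact_Icc).of_isClosed_subset hclosed hsub

lemma continuous_arg {m : ℕ} : Continuous fun p : (Fin (m+1) → ℝ) × (Fin m → ℝ) => arg p.1 p.2 := by
  unfold arg; fun_prop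

lemma continuous_arg_right {m : ℕ} (lam : Fin (m+1) → ℝ) : Continuous (arg lam) :=
  continuous_arg.comp (Continuous.prodMk_right lam)

lemma continuous_arg_left {m : ℕ} (t : Fin m → ℝ) : Continuous (fun lam => arg lam t) :=
  continuous_arg.comp (Continuous.prodMk_left t)

lemma abs_arg_le {m : ℕ} (lam : Fin (m+1) → ℝ) {t : Fin m → ℝ} (ht : t ∈ T m) :
    |arg lam t| ≤ ‖lam‖ := by
  obtain ⟨h0, h1⟩ := ht
  have hb : ∀ j, |lam j| ≤ ‖lam‖ := fun j => by
    simpa using norm_le_pi_norm lam j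
  have hn : (0:ℝ) ≤ ‖lam‖ := norm_nonneg _
  calc |arg lam t| ≤ (1 - ∑ i, t i) * |lam 0| + ∑ i, t i * |lam i.succ| := by
        refine (abs_add_le _ _).trans (add_le_add ?_ ?_)
        · rw [abs_mul, _root_.abs_of_nonneg (show (0:ℝ) ≤ 1 - ∑ i, t i by linarith)]
        · refine (Finset.abs_sum_le_sum_abs _ _).trans ?_
          refine Finset.sum_le_sum fun i _ => ?_
          rw [abs_mul, _root_.abs_of_nonneg (h0 i)]
    _ ≤ (1 - ∑ i, t i) * ‖lam‖ + ∑ i, t i * ‖lam‖ := by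
        refine add_le_add (mul_le_mul_of_nonneg_left (hb 0) (by linarith)) ?_
        exact Finset.sum_le_sum fun i _ => mul_le_mul_of_nonneg_left (hb i.succ) (h0 i)
    _ = ‖lam‖ := by rw [← Finset.sum_mul]; ring


lemma measurable_skew_aux (k : ℕ) :
    Measurable fun p : (Fin k → ℝ) × ℝ => (1 - ∑ i, p.1 i) - p.2 :=
  (measurable_const.sub (Finset.measurable_sum _ fun i _ =>
    (measurable_pi_apply i).comp measurable_fst)).sub measurable_snd

/-- skew map `(r, u) ↦ (r, (1 - ∑ r) - u)` as a measurable equiv (an involution). -/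
def skewE (k : ℕ) : ((Fin k → ℝ) × ℝ) ≃ᵐ ((Fin k → ℝ) × ℝ) where
  toFun p := (p.1, (1 - ∑ i, p.1 i) - p.2)
  invFun p := (p.1, (1 - ∑ i, p.1 i) - p.2)
  left_inv p := by simp
  right_inv p := by simp
  measurable_toFun := measurable_fst.prodMk (measurable_skew_aux k)
  measurable_invFun := measurable_fst.prodMk (measurable_skew_aux k)

lemma skewE_mp (k : ℕ) : MeasurePreserving (skewE k) volume volume := by
  rw [Measure.volume_eq_prod]
  have : MeasurePreserving
      (fun p : (Fin k → ℝ) × ℝ => (id p.1, (fun (r : Fin k → ℝ) (u : ℝ) => (1 - ∑ i, r i) - u) p.1 p.2))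
      ((volume : Measure (Fin k → ℝ)).prod volume) ((volume : Measure (Fin k → ℝ)).prod volume) := by
    refine MeasurePreserving.skew_product (g := fun (r : Fin k → ℝ) (u : ℝ) => (1 - ∑ i, r i) - u)
        (μc := (volume : Measure ℝ)) (μd := (volume : Measure ℝ)) (MeasurePreserving.id (volume : Measure (Fin k → ℝ))) ?_ ?_
    · exact measurable_skew_aux k
    · refine Filter.Eventually.of_forall fun r => ?_
      have h1 := measurePreserving_add_left (volume : Measure ℝ) (1 - ∑ i, r i)
      have h2 := Measure.measurePreserving_neg (volume : Measure ℝ)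
      have h3 := h1.comp h2
      have he : (fun x : ℝ => (1 - ∑ i, r i) + x) ∘ Neg.neg = fun u : ℝ => (1 - ∑ i, r i) - u := by
        funext t; simp [Function.comp, sub_eq_add_neg]
      rw [he] at h3
      exact h3.map_eq
  exact this


def PhiE (k : ℕ) : (Fin (k+1) → ℝ) ≃ᵐ (Fin (k+1) → ℝ) :=
  (MeasurableEquiv.piFinSuccAbove (fun _ => ℝ) (Fin.last k)).trans <|
    MeasurableEquiv.prodComm.trans <| (skewE k).trans <|
      MeasurableEquiv.prodComm.trans (MeasurableEquiv.piFinSuccAbove (fun _ => ℝ) 0).symm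

lemma PhiE_eq (k : ℕ) :
    ⇑(PhiE k) = fun t : Fin (k+1) → ℝ =>
      (Fin.cons (1 - ∑ i, t i) (t ∘ Fin.castSucc) : Fin (k+1) → ℝ) := by
  funext t
  show (MeasurableEquiv.piFinSuccAbove (fun _ => ℝ) 0).symm
      (MeasurableEquiv.prodComm ((skewE k)
        (MeasurableEquiv.prodComm
          ((MeasurableEquiv.piFinSuccAbove (fun _ => ℝ) (Fin.last k)) t)))) = _
  simp only [MeasurableEquiv.piFinSuccAbove_apply, MeasurableEquiv.piFinSuccAbove_symm_apply, MeasurableEquiv.prodComm, skewE,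
    MeasurableEquiv.coe_mk, MeasurableEquiv.symm_mk, Equiv.prodComm_apply, Prod.swap,
    Equiv.coe_fn_mk, Equiv.coe_fn_symm_mk]
  simp only [Equiv.symm_symm, Fin.insertNthEquiv_apply, Fin.insertNthEquiv_symm_apply,
    Fin.insertNth_zero', Fin.succAbove_last]
  have hs : ∑ x : Fin k, t x.castSucc + t (Fin.last k) = ∑ i : Fin (k+1), t i :=
    (Fin.sum_univ_castSucc t).symm
  simp only [Fin.insertNthEquiv, Equiv.coe_fn_mk, Fin.insertNth_zero']
  have hr : (Fin.last k).removeNth t = t ∘ Fin.castSucc := by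
    funext j; simp [Fin.removeNth, Fin.succAbove_last]
  rw [hr]
  have : 1 - ∑ x : Fin k, (t ∘ Fin.castSucc) x - t (Fin.last k) = 1 - ∑ i : Fin (k+1), t i := by
    simp only [Function.comp]
    linarith
  rw [this]

lemma PhiE_mp (k : ℕ) : MeasurePreserving (PhiE k) volume volume := by
  have h1 := volume_preserving_piFinSuccAbove (fun _ : Fin (k+1) => ℝ) (Fin.last k)
  have h2 : MeasurePreserving (MeasurableEquiv.prodComm : (ℝ × (Fin k → ℝ)) ≃ᵐ _)
      volume volume := by
    rw [Measure.volume_eq_prod, Measure.volume_eq_prod]; exact Measure.measurePreserving_swap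
  have h3 := skewE_mp k
  have h4 : MeasurePreserving (MeasurableEquiv.prodComm : ((Fin k → ℝ) × ℝ) ≃ᵐ _)
      volume volume := by
    rw [Measure.volume_eq_prod, Measure.volume_eq_prod]; exact Measure.measurePreserving_swap
  have h5 := (volume_preserving_piFinSuccAbove (fun _ : Fin (k+1) => ℝ) 0).symm
  unfold PhiE
  simp only [MeasurableEquiv.coe_trans]
  exact (((h5.comp h4).comp h3).comp h2).comp h1



lemma Phi_pre (k : ℕ) :
    (fun t : Fin (k+1) → ℝ => (Fin.cons (1 - ∑ i, t i) (t ∘ Fin.castSucc) : Fin (k+1) → ℝ))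
      ⁻¹' T (k+1) = T (k+1) := by
  ext t
  have hs : ∑ i : Fin (k+1), t i = (∑ j : Fin k, t j.castSucc) + t (Fin.last k) :=
    Fin.sum_univ_castSucc t
  simp only [Set.mem_preimage, T, Set.mem_setOf_eq, Fin.sum_cons, Function.comp]
  constructor
  · rintro ⟨h0, h1⟩
    have ha : (0:ℝ) ≤ 1 - ∑ i, t i := by simpa using h0 0
    have hb : ∀ j : Fin k, 0 ≤ t j.castSucc := fun j => by simpa using h0 j.succ
    have hc : 0 ≤ t (Fin.last k) := by linarith
    refine ⟨fun i => ?_, by linarith⟩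
    induction i using Fin.lastCases with
    | last => exact hc
    | cast j => exact hb j
  · rintro ⟨h0, h1⟩
    refine ⟨fun i => ?_, by linarith [h0 (Fin.last k)]⟩
    induction i using Fin.cases with
    | zero => simpa using sub_nonneg.2 h1
    | succ j => simpa using h0 j.castSucc

lemma cov (m : ℕ) (ν : Fin (m+1) → ℝ) (h : ℝ → ℂ) :
    ∫ t in T m, h ((1 - ∑ i, t i) * ν (Fin.last m) + ∑ i, t i * ν i.castSucc)
      = ∫ t in T m, h (arg ν t) := by
  cases m with
  | zero =>
    refine setIntegral_congr_fun (measurableSet_T _) fun t _ => ?_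
    have : arg ν t = ν 0 := by simp [arg]
    rw [this]
    norm_num [show (Fin.last 0) = 0 from rfl]
  | succ k =>
    have hmp := PhiE_eq k ▸ PhiE_mp k
    have hemb := PhiE_eq k ▸ (PhiE k).measurableEmbedding
    have key := hmp.setIntegral_preimage_emb hemb
      (fun y => h ((1 - ∑ i, y i) * ν (Fin.last (k+1)) + ∑ i, y i * ν i.castSucc)) (T (k+1))
    rw [Phi_pre k] at key
    rw [← key]
    refine setIntegral_congr_fun (measurableSet_T _) fun t _ => ?_
    have hs : ∑ i : Fin (k+1), t i = (∑ j : Fin k, t j.castSucc) + t (Fin.last k) :=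
      Fin.sum_univ_castSucc t
    have e1 : ∑ i : Fin (k+1), (Fin.cons (1 - ∑ i, t i) (t ∘ Fin.castSucc) : Fin (k+1) → ℝ) i
        = (1 - ∑ i, t i) + ∑ j : Fin k, t j.castSucc := by
      rw [Fin.sum_cons]; simp [Function.comp]
    have e2 : ∑ i : Fin (k+1),
          (Fin.cons (1 - ∑ i, t i) (t ∘ Fin.castSucc) : Fin (k+1) → ℝ) i * ν i.castSucc
        = (1 - ∑ i, t i) * ν 0 + ∑ j : Fin k, t j.castSucc * ν (j.succ.castSucc) := by
      rw [Fin.sum_univ_succ]; simp [Function.comp]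
    have e3 : arg ν t = (1 - ∑ i, t i) * ν 0 +
        (∑ j : Fin k, t j.castSucc * ν (j.castSucc.succ) + t (Fin.last k) * ν (Fin.last (k+1))) := by
      rw [arg]; congr 1
      rw [Fin.sum_univ_castSucc (f := fun i => t i * ν i.succ)]
      simp [Fin.succ_last]
    congr 1
    rw [e1, e2, e3]
    simp only [Fin.succ_castSucc]
    linear_combination (ν (Fin.last (k+1))) * hs


/-- The sliced region. -/
def S (m : ℕ) : Set (ℝ × (Fin m → ℝ)) :=
  {p | 0 ≤ p.1 ∧ (∀ i, 0 ≤ p.2 i) ∧ p.1 + ∑ i, p.2 i ≤ 1}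

lemma measurableSet_S (m : ℕ) : MeasurableSet (S m) := by
  have h1 : MeasurableSet {p : ℝ × (Fin m → ℝ) | 0 ≤ p.1} :=
    measurableSet_le measurable_const measurable_fst
  have h2 : MeasurableSet {p : ℝ × (Fin m → ℝ) | ∀ i, 0 ≤ p.2 i} := by
    rw [Set.setOf_forall]
    exact MeasurableSet.iInter fun i =>
      measurableSet_le measurable_const (by fun_prop)
  have h3 : MeasurableSet {p : ℝ × (Fin m → ℝ) | p.1 + ∑ i, p.2 i ≤ 1} := by
    exact measurableSet_le (by fun_prop) measurable_const
  exact h1.inter (h2.inter h3)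

lemma isCompact_S (m : ℕ) : IsCompact (S m) := by
  have hsub : S m ⊆ Set.Icc ((0 : ℝ), (0 : Fin m → ℝ)) (1, 1) := by
    rintro ⟨u, r⟩ ⟨h0, h1, h2⟩
    have hsr : (0:ℝ) ≤ ∑ i, r i := Finset.sum_nonneg fun i _ => h1 i
    refine ⟨⟨h0, fun i => h1 i⟩, ⟨by simpa using by linarith, fun i => ?_⟩⟩
    have : r i ≤ ∑ j, r j := Finset.single_le_sum (fun j _ => h1 j) (Finset.mem_univ i)
    show r i ≤ 1
    linarith
  have hclosed : IsClosed (S m) := by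
    have h1 : IsClosed {p : ℝ × (Fin m → ℝ) | 0 ≤ p.1} :=
      isClosed_le continuous_const continuous_fst
    have h2 : IsClosed {p : ℝ × (Fin m → ℝ) | ∀ i, 0 ≤ p.2 i} := by
      rw [Set.setOf_forall]
      exact isClosed_iInter fun i =>
        isClosed_le continuous_const ((continuous_apply i).comp continuous_snd)
    have h3 : IsClosed {p : ℝ × (Fin m → ℝ) | p.1 + ∑ i, p.2 i ≤ 1} := by
      refine isClosed_le (continuous_fst.add ?_) continuous_const
      exact continuous_finset_sum _ fun i _ => (continuous_apply i).comp continuous_snd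
    exact h1.inter (h2.inter h3)
  exact isCompact_Icc.of_isClosed_subset hclosed hsub

lemma continuous_snoc_pair (m : ℕ) :
    Continuous fun p : ℝ × (Fin m → ℝ) => (Fin.snoc p.2 p.1 : Fin (m+1) → ℝ) := by
  have : ∀ p : ℝ × (Fin m → ℝ), (Fin.snoc p.2 p.1 : Fin (m+1) → ℝ)
      = Fin.insertNth (Fin.last m) p.1 p.2 := fun p => (Fin.insertNth_last' p.1 p.2).symm
  simp only [this]
  exact Continuous.finInsertNth (A := fun _ : Fin (m+1) => ℝ) (Fin.last m)
    continuous_fst continuous_snd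

lemma mem_T_snoc {m : ℕ} {r : Fin m → ℝ} {u : ℝ} :
    (Fin.snoc r u : Fin (m+1) → ℝ) ∈ T (m+1) ↔ (u, r) ∈ S m := by
  have hs : ∑ i : Fin (m+1), (Fin.snoc r u : Fin (m+1) → ℝ) i = (∑ j, r j) + u := by
    rw [Fin.sum_univ_castSucc]
    simp
  constructor
  · rintro ⟨h0, h1⟩
    rw [hs] at h1
    refine ⟨by simpa using h0 (Fin.last m), fun i => by simpa using h0 i.castSucc, by linarith⟩
  · rintro ⟨h0, h1, h2⟩
    refine ⟨fun i => ?_, by rw [hs]; linarith⟩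
    induction i using Fin.lastCases with
    | last => simpa using h0
    | cast j => simpa using h1 j

lemma slice (m : ℕ) (F : (Fin (m+1) → ℝ) → ℂ) (hF : Continuous F) :
    ∫ t in T (m+1), F t
      = ∫ r in T m, ∫ u in Set.Icc (0:ℝ) (1 - ∑ i, r i), F (Fin.snoc r u) := by
  set e := MeasurableEquiv.piFinSuccAbove (fun _ : Fin (m+1) => ℝ) (Fin.last m) with he
  have hsymm : ∀ p : ℝ × (Fin m → ℝ), e.symm p = (Fin.snoc p.2 p.1 : Fin (m+1) → ℝ) := by
    intro p
    show (Fin.insertNthEquiv (fun _ => ℝ) (Fin.last m)).symm.symm p = _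
    simp [Fin.insertNth_last', Fin.snocEquiv]
  have mp := (volume_preserving_piFinSuccAbove (fun _ : Fin (m+1) => ℝ) (Fin.last m)).symm
  have key := mp.setIntegral_preimage_emb e.symm.measurableEmbedding F (T (m+1))
  have hpre : e.symm ⁻¹' T (m+1) = S m := by
    ext p
    rw [Set.mem_preimage, hsymm p]
    exact mem_T_snoc
  rw [hpre] at key
  rw [← key]
  have hFe : ∀ p : ℝ × (Fin m → ℝ), F (e.symm p) = F (Fin.snoc p.2 p.1) := fun p => by
    rw [hsymm p]
  calc ∫ p in S m, F (e.symm p)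
      = ∫ p in S m, F (Fin.snoc p.2 p.1) := by
        exact setIntegral_congr_fun (measurableSet_S m) fun p _ => hFe p
    _ = ∫ p : ℝ × (Fin m → ℝ), Set.indicator (S m) (fun p => F (Fin.snoc p.2 p.1)) p := by
        rw [integral_indicator (measurableSet_S m)]
    _ = ∫ r, ∫ u, Set.indicator (S m) (fun p => F (Fin.snoc p.2 p.1)) (u, r) := by
        rw [Measure.volume_eq_prod]
        refine integral_prod_symm _ ?_
        rw [integrable_indicator_iff (measurableSet_S m)]
        refine ContinuousOn.integrableOn_compact (isCompact_S m) ?_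
        exact ((hF.comp (continuous_snoc_pair m)).continuousOn)
    _ = ∫ r, Set.indicator (T m)
          (fun r => ∫ u in Set.Icc (0:ℝ) (1 - ∑ i, r i), F (Fin.snoc r u)) r := by
        refine integral_congr_ae (Filter.Eventually.of_forall fun r => ?_)
        dsimp only
        by_cases hr : r ∈ T m
        · have hpt : (fun u => Set.indicator (S m) (fun p => F (Fin.snoc p.2 p.1)) (u, r))
              = Set.indicator (Set.Icc (0:ℝ) (1 - ∑ i, r i)) (fun u => F (Fin.snoc r u)) := by
            funext u
            by_cases hu : (u, r) ∈ S m
            · have hu' : u ∈ Set.Icc (0:ℝ) (1 - ∑ i, r i) := ⟨hu.1, by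
                have := hu.2.2; linarith⟩
              rw [Set.indicator_of_mem hu, Set.indicator_of_mem hu']
            · have hu' : u ∉ Set.Icc (0:ℝ) (1 - ∑ i, r i) := by
                intro hc
                exact hu ⟨hc.1, hr.1, by have := hc.2; linarith⟩
              rw [Set.indicator_of_notMem hu, Set.indicator_of_notMem hu']
          rw [hpt, integral_indicator measurableSet_Icc, Set.indicator_of_mem hr]
        · have hpt : (fun u => Set.indicator (S m) (fun p => F (Fin.snoc p.2 p.1)) (u, r))
              = fun _ => 0 := by
            funext u
            refine Set.indicator_of_notMem (fun hc => hr ⟨hc.2.1, ?_⟩) _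
            have h1 := hc.1
            have h2 := hc.2.2
            linarith
          rw [hpt, Set.indicator_of_notMem hr]
          simp
    _ = ∫ r in T m, ∫ u in Set.Icc (0:ℝ) (1 - ∑ i, r i), F (Fin.snoc r u) := by
        rw [integral_indicator (measurableSet_T m)]

lemma continuous_G {m : ℕ} (h : ℝ → ℂ) (hh : Continuous h) :
    Continuous fun lam : Fin (m+1) → ℝ => ∫ t in T m, h (arg lam t) := by
  rw [continuous_iff_continuousAt]
  intro lam0
  obtain ⟨C, hC⟩ := (isCompact_Icc (a := -(‖lam0‖+1)) (b := ‖lam0‖+1)).exists_bound_of_continuousOn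
    hh.continuousOn
  refine continuousAt_of_dominated (bound := fun _ => C) ?_ ?_ ?_ ?_
  · exact Filter.Eventually.of_forall fun lam =>
      ((hh.comp (continuous_arg_right lam)).aestronglyMeasurable)
  · refine Filter.eventually_iff_exists_mem.2
      ⟨Metric.ball lam0 1, Metric.ball_mem_nhds _ one_pos, fun lam hl => ?_⟩
    refine (ae_restrict_iff' (measurableSet_T m)).2 (Filter.Eventually.of_forall fun t ht => ?_)
    refine hC _ ?_
    have h1 : |arg lam t| ≤ ‖lam‖ := abs_arg_le lam ht
    have h2 : ‖lam‖ ≤ ‖lam0‖ + 1 := by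
      have h3 : dist lam lam0 < 1 := Metric.mem_ball.1 hl
      have h4 : ‖lam - lam0‖ < 1 := by rwa [← dist_eq_norm]
      calc ‖lam‖ = ‖lam0 + (lam - lam0)‖ := by ring_nf
        _ ≤ ‖lam0‖ + ‖lam - lam0‖ := norm_add_le _ _
        _ ≤ ‖lam0‖ + 1 := by linarith
    have := abs_le.1 (h1.trans h2)
    exact ⟨this.1, this.2⟩
  · exact integrableOn_const (isCompact_T m).measure_lt_top.ne
  · exact Filter.Eventually.of_forall fun t => (hh.comp (continuous_arg_left t)).continuousAt

lemma dense_offdiag (m : ℕ) :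
    Dense {lam : Fin (m+2) → ℝ | lam 0 ≠ lam (Fin.last (m+1))} := by
  intro x
  by_cases hx : x 0 ≠ x (Fin.last (m+1))
  · exact subset_closure hx
  push_neg at hx
  have h0last : (Fin.last (m+1)) ≠ (0 : Fin (m+2)) := by
    simp [Fin.ext_iff]
  have hcont : Continuous fun v : ℝ => Function.update x 0 v := by
    refine continuous_pi fun j => ?_
    by_cases hj : j = 0
    · subst hj; simpa using continuous_id'
    · simp only [Function.update_of_ne hj]; exact continuous_const
  have htend : Filter.Tendsto (fun k : ℕ => Function.update x 0 (x 0 + (1:ℝ)/(k+1)))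
      Filter.atTop (nhds x) := by
    have h1 : Filter.Tendsto (fun k : ℕ => x 0 + (1:ℝ)/(k+1)) Filter.atTop (nhds (x 0 + 0)) :=
      tendsto_const_nhds.add tendsto_one_div_add_atTop_nhds_zero_nat
    rw [add_zero] at h1
    have h2 := (hcont.tendsto (x 0)).comp h1
    simpa [Function.comp_def, Function.update_eq_self] using h2
  refine mem_closure_of_tendsto htend (Filter.Eventually.of_forall fun k => ?_)
  simp only [Set.mem_setOf_eq, Function.update_self, Function.update_of_ne h0last]
  rw [← hx]
  intro hc
  have : (1:ℝ)/(k+1) = 0 := by linarith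
  have hk : (0:ℝ) < 1/(k+1) := by positivity
  linarith

lemma base_case (f : ℝ → ℂ) (lam : Fin 1 → ℝ) :
    f (lam 0) = ∫ t in T 0, iteratedDeriv 0 f (arg lam t) := by
  have hTuniv : T 0 = Set.univ := Set.eq_univ_of_forall fun t => ⟨fun i => i.elim0, by simp⟩
  rw [hTuniv, Measure.restrict_univ]
  have heq : (fun t : Fin 0 → ℝ => iteratedDeriv 0 f (arg lam t)) = fun _ => f (lam 0) := by
    funext t; simp [arg, iteratedDeriv_zero]
  rw [heq, integral_const]
  have : (volume : Measure (Fin 0 → ℝ)) Set.univ = 1 := by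
    rw [MeasureTheory.volume_pi, Measure.pi_univ]
    simp
  rw [Measure.real, this]
  simp

theorem hermite_genocchi (n : ℕ) (f : ℝ → ℂ) (hf : ContDiff ℝ (n : ℕ) f)
    (D : ∀ m : ℕ, (Fin (m + 1) → ℝ) → ℂ)
    (hD0 : ∀ lam : Fin 1 → ℝ, D 0 lam = f (lam 0))
    (hDrec : ∀ (m : ℕ) (lam : Fin (m + 2) → ℝ), lam 0 ≠ lam (Fin.last (m + 1)) →
      D (m + 1) lam
        = (D m (lam ∘ Fin.castSucc) - D m (lam ∘ Fin.succ)) /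
            ((lam 0 : ℂ) - (lam (Fin.last (m + 1)) : ℂ)))
    (hDcont : ∀ m : ℕ, Continuous (D m)) :
    ∀ m : ℕ, m ≤ n → ∀ lam : Fin (m + 1) → ℝ,
      D m lam = ∫ t in T m, iteratedDeriv m f (arg lam t) := by
  intro m
  induction m with
  | zero => intro _ lam; rw [hD0]; exact base_case f lam
  | succ m IH =>
    intro hm1
    have hm : m ≤ n := le_trans (Nat.le_succ m) hm1
    have hhc : Continuous (iteratedDeriv m f) :=
      hf.continuous_iteratedDeriv m (by exact_mod_cast hm)
    have hh'c : Continuous (iteratedDeriv (m+1) f) :=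
      hf.continuous_iteratedDeriv (m+1) (by exact_mod_cast hm1)
    have hder : ∀ y : ℝ, HasDerivAt (iteratedDeriv m f) (iteratedDeriv (m+1) f y) y := by
      intro y
      have hd : Differentiable ℝ (iteratedDeriv m f) :=
        hf.differentiable_iteratedDeriv m (by exact_mod_cast Nat.lt_of_lt_of_le (Nat.lt_succ_self m) hm1)
      have h1 := (hd y).hasDerivAt
      rwa [show iteratedDeriv (m+1) f y = deriv (iteratedDeriv m f) y from by
        rw [iteratedDeriv_succ]]
    have heq : Set.EqOn (D (m+1)) (fun lam => ∫ t in T (m+1), iteratedDeriv (m+1) f (arg lam t))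
        {lam : Fin (m+2) → ℝ | lam 0 ≠ lam (Fin.last (m+1))} := by
      intro lam hlam
      have hlam' : lam 0 ≠ lam (Fin.last (m+1)) := hlam
      set d : ℝ := lam (Fin.last (m+1)) - lam 0 with hd_def
      have hd : d ≠ 0 := sub_ne_zero.2 (Ne.symm hlam')
      have hdC : (d : ℂ) ≠ 0 := by exact_mod_cast hd
      -- the right side, sliced
      have hRHS : (∫ t in T (m+1), iteratedDeriv (m+1) f (arg lam t))
          = ((d:ℂ))⁻¹ * ((∫ r in T m, iteratedDeriv m f (arg (lam ∘ Fin.succ) r))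
              - ∫ r in T m, iteratedDeriv m f (arg (lam ∘ Fin.castSucc) r)) := by
        rw [slice m (fun t => iteratedDeriv (m+1) f (arg lam t)) (hh'c.comp (continuous_arg_right lam))]
        have hinner : ∀ r ∈ T m,
            (∫ u in Set.Icc (0:ℝ) (1 - ∑ i, r i), iteratedDeriv (m+1) f (arg lam (Fin.snoc r u)))
            = ((d:ℂ))⁻¹ * iteratedDeriv m f
                ((1 - ∑ i, r i) * (lam ∘ Fin.succ) (Fin.last m)
                  + ∑ i, r i * (lam ∘ Fin.succ) i.castSucc)
              - ((d:ℂ))⁻¹ * iteratedDeriv m f (arg (lam ∘ Fin.castSucc) r) := by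
          intro r hr
          set b : ℝ := 1 - ∑ i, r i with hb_def
          have hb : 0 ≤ b := sub_nonneg.2 hr.2
          set c : ℝ := arg (lam ∘ Fin.castSucc) r with hc_def
          have hargsnoc : ∀ u : ℝ, arg lam (Fin.snoc r u) = c + u * d := by
            intro u
            have hsum : ∑ i : Fin (m+1), (Fin.snoc r u : Fin (m+1) → ℝ) i = (∑ j, r j) + u := by
              rw [Fin.sum_univ_castSucc]; simp
            have hsum2 : ∑ i : Fin (m+1), (Fin.snoc r u : Fin (m+1) → ℝ) i * lam i.succ
                = (∑ j : Fin m, r j * lam (j.castSucc.succ)) + u * lam (Fin.last (m+1)) := by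
              rw [Fin.sum_univ_castSucc (f := fun i => (Fin.snoc r u : Fin (m+1) → ℝ) i * lam i.succ)]
              simp [Fin.succ_last]
            rw [arg, hsum, hsum2, hc_def, arg, hd_def]
            simp only [Function.comp, Fin.castSucc_zero, Fin.succ_castSucc]
            ring
          have hE : c + b * d = (1 - ∑ i, r i) * (lam ∘ Fin.succ) (Fin.last m)
              + ∑ i, r i * (lam ∘ Fin.succ) i.castSucc := by
            rw [hc_def, arg, hb_def, hd_def]
            simp only [Function.comp, Fin.castSucc_zero, Fin.succ_castSucc, Fin.succ_last]
            ring
          have hc0 : c + 0 * d = c := by ring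
          calc ∫ u in Set.Icc (0:ℝ) b, iteratedDeriv (m+1) f (arg lam (Fin.snoc r u))
              = ∫ u in Set.Icc (0:ℝ) b, iteratedDeriv (m+1) f (c + u * d) := by
                refine setIntegral_congr_fun measurableSet_Icc fun u _ => ?_
                rw [hargsnoc u]
            _ = ∫ u in Set.Ioc (0:ℝ) b, iteratedDeriv (m+1) f (c + u * d) :=
                integral_Icc_eq_integral_Ioc
            _ = ∫ u in (0:ℝ)..b, iteratedDeriv (m+1) f (c + u * d) :=
                (intervalIntegral.integral_of_le hb).symm
            _ = ((d:ℂ))⁻¹ * iteratedDeriv m f (c + b * d)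
                - ((d:ℂ))⁻¹ * iteratedDeriv m f (c + 0 * d) := by
                refine intervalIntegral.integral_eq_sub_of_hasDerivAt
                  (f := fun u : ℝ => ((d:ℂ))⁻¹ * iteratedDeriv m f (c + u * d)) (fun u _ => ?_) ?_
                · have h1 : HasDerivAt (fun u : ℝ => c + u * d) d u := by
                    simpa using ((hasDerivAt_id u).mul_const d).const_add c
                  have h2 := (hder (c + u * d)).scomp u h1
                  have h3 := h2.const_mul ((d:ℂ))⁻¹
                  rw [Complex.real_smul, ← mul_assoc, inv_mul_cancel₀ hdC, one_mul] at h3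
                  exact h3
                · exact ((hh'c.comp (by fun_prop)).intervalIntegrable 0 b)
            _ = ((d:ℂ))⁻¹ * iteratedDeriv m f ((1 - ∑ i, r i) * (lam ∘ Fin.succ) (Fin.last m)
                  + ∑ i, r i * (lam ∘ Fin.succ) i.castSucc)
                - ((d:ℂ))⁻¹ * iteratedDeriv m f (arg (lam ∘ Fin.castSucc) r) := by
                rw [hE, hc0]
        rw [setIntegral_congr_fun (measurableSet_T m) hinner]
        rw [integral_sub ?int1 ?int2]
        case int1 =>
          exact (((hhc.comp (by fun_prop)).continuousOn).integrableOn_compact (isCompact_T m)).const_mul _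
        case int2 =>
          exact (((hhc.comp (continuous_arg_right (lam ∘ Fin.castSucc))).continuousOn).integrableOn_compact (isCompact_T m)).const_mul _
        rw [integral_const_mul, integral_const_mul, cov m (lam ∘ Fin.succ) (iteratedDeriv m f)]
        ring
      rw [hDrec m lam hlam', IH hm (lam ∘ Fin.castSucc), IH hm (lam ∘ Fin.succ)]
      dsimp only
      rw [hRHS]
      have h0C : ((lam 0 : ℝ) : ℂ) - ((lam (Fin.last (m+1)) : ℝ) : ℂ) = -(d : ℂ) := by
        push_cast [hd_def]; ring
      rw [h0C, div_neg, ← neg_div, neg_sub, div_eq_inv_mul]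
    have hfun := Continuous.ext_on (dense_offdiag m) (hDcont (m+1))
      (continuous_G (iteratedDeriv (m+1) f) hh'c) heq
    exact fun lam => congrFun hfun lam

end DDF

open DDF in
/-- Let `f ∈ Cⁿ(ℝ)` and let `D m` denote the `m`-th divided difference of
`f`, defined recursively by `D 0 (λ) = f(λ₀)` and
`D (m+1)(λ₀,…,λ_{m+1}) = (D m(λ₀,…,λ_m) - D m(λ₁,…,λ_{m+1}))/(λ₀ - λ_{m+1})` off the
diagonal, extended continuously. Suppose `f^{(n)}(λ) = ∫ e^{ixλ} dμ(x)` for a finite complex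
measure (encoded by a finite positive measure `μ` with integrable complex density `ρ`).
Then `f^{[n]}(λ₀,…,λₙ) = ∫_ℝ ∫_{Δₙ} e^{is₀xλ₀}⋯e^{isₙxλₙ} ds dμ(x)`, where the simplex
`Δₙ = {s ∈ ℝ_{≥0}^{n+1} : Σ sⱼ = 1}` is parametrized by
`{t ∈ ℝⁿ : tᵢ ≥ 0, Σ tᵢ ≤ 1}` (Lebesgue measure, total mass `1/n!`) via
`s = (1 - Σ tᵢ, t₁, …, tₙ)`. -/
theorem divided_difference_fourier_simplex_rep
    (n : ℕ) (f : ℝ → ℂ) (hf : ContDiff ℝ (n : ℕ) f)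
    (μ : Measure ℝ) [IsFiniteMeasure μ] (ρ : ℝ → ℂ) (hρ : Integrable ρ μ)
    (hFour : ∀ lam : ℝ,
      iteratedDeriv n f lam = ∫ x, Complex.exp (I * (x : ℂ) * (lam : ℂ)) * ρ x ∂μ)
    (D : ∀ m : ℕ, (Fin (m + 1) → ℝ) → ℂ)
    (hD0 : ∀ lam : Fin 1 → ℝ, D 0 lam = f (lam 0))
    (hDrec : ∀ (m : ℕ) (lam : Fin (m + 2) → ℝ), lam 0 ≠ lam (Fin.last (m + 1)) →
      D (m + 1) lam
        = (D m (lam ∘ Fin.castSucc) - D m (lam ∘ Fin.succ)) /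
            ((lam 0 : ℂ) - (lam (Fin.last (m + 1)) : ℂ)))
    (hDcont : ∀ m : ℕ, Continuous (D m)) :
    ∀ lam : Fin (n + 1) → ℝ,
      D n lam
        = ∫ x,
            (∫ t in {t : Fin n → ℝ | (∀ i, 0 ≤ t i) ∧ ∑ i, t i ≤ 1},
              ∏ j : Fin (n + 1),
                Complex.exp
                  (I * ((Fin.cons (1 - ∑ i, t i) t : Fin (n + 1) → ℝ) j : ℂ) *
                    (x : ℂ) * (lam j : ℂ)))
              * ρ x ∂μ := by

  intro lam
  rw [hermite_genocchi n f hf D hD0 hDrec hDcont n le_rfl lam]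
  have hprod : ∀ (t : Fin n → ℝ) (x : ℝ),
      (∏ j : Fin (n + 1), Complex.exp
        (I * ((Fin.cons (1 - ∑ i, t i) t : Fin (n + 1) → ℝ) j : ℂ) * (x : ℂ) * (lam j : ℂ)))
      = Complex.exp (I * (x : ℂ) * ((arg lam t : ℝ) : ℂ)) := by
    intro t x
    rw [← Complex.exp_sum]
    congr 1
    rw [Fin.sum_univ_succ]
    simp only [Fin.cons_zero, Fin.cons_succ]
    have h1 : ∀ i : Fin n, I * ((t i : ℝ) : ℂ) * (x : ℂ) * (lam i.succ : ℂ)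
        = (I * x) * (((t i : ℝ) : ℂ) * ((lam i.succ : ℝ) : ℂ)) := fun i => by ring
    rw [Finset.sum_congr rfl fun i _ => h1 i, ← Finset.mul_sum, DDF.arg]
    push_cast
    ring
  have hcontexp : Continuous fun p : ℝ × (Fin n → ℝ) =>
      Complex.exp (I * (p.1 : ℂ) * ((arg lam p.2 : ℝ) : ℂ)) := by
    refine Complex.continuous_exp.comp ?_
    refine (continuous_const.mul ?_).mul ?_
    · exact Complex.continuous_ofReal.comp continuous_fst
    · exact Complex.continuous_ofReal.comp ((continuous_arg_right lam).comp continuous_snd)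
  have hint : Integrable (Function.uncurry fun (x : ℝ) (t : Fin n → ℝ) =>
      Complex.exp (I * (x : ℂ) * ((arg lam t : ℝ) : ℂ)) * ρ x)
      (μ.prod (volume.restrict (T n))) := by
    haveI : IsFiniteMeasure (volume.restrict (T n)) :=
      ⟨by rw [Measure.restrict_apply_univ]; exact (isCompact_T n).measure_lt_top⟩
    have hasm : AEStronglyMeasurable (Function.uncurry fun (x : ℝ) (t : Fin n → ℝ) =>
        Complex.exp (I * (x : ℂ) * ((arg lam t : ℝ) : ℂ)) * ρ x) (μ.prod (volume.restrict (T n))) := by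
      refine AEStronglyMeasurable.mul hcontexp.aestronglyMeasurable ?_
      exact hρ.aestronglyMeasurable.comp_fst
    have h2 : Integrable (fun p : ℝ × (Fin n → ℝ) => ‖ρ p.1‖ * 1)
        (μ.prod (volume.restrict (T n))) := Integrable.mul_prod hρ.norm (integrable_const 1)
    simp only [mul_one] at h2
    refine Integrable.mono' h2 hasm (Filter.Eventually.of_forall fun p => ?_)
    rw [Function.uncurry, norm_mul]
    have hn1 : ‖Complex.exp (I * (p.1 : ℂ) * ((arg lam p.2 : ℝ) : ℂ))‖ = 1 := by
      rw [show I * (p.1 : ℂ) * ((arg lam p.2 : ℝ) : ℂ)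
          = (((p.1 * arg lam p.2 : ℝ) : ℂ)) * I from by push_cast; ring]
      exact Complex.norm_exp_ofReal_mul_I _
    rw [hn1, one_mul]
  have hswap := MeasureTheory.integral_integral_swap hint
  show _ = ∫ x, (∫ t in T n, ∏ j : Fin (n + 1), Complex.exp
      (I * ((Fin.cons (1 - ∑ i, t i) t : Fin (n + 1) → ℝ) j : ℂ) * (x : ℂ) * (lam j : ℂ)))
      * ρ x ∂μ
  calc ∫ t in T n, iteratedDeriv n f (arg lam t)
      = ∫ t in T n, ∫ x, Complex.exp (I * (x : ℂ) * ((arg lam t : ℝ) : ℂ)) * ρ x ∂μ := by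
        exact setIntegral_congr_fun (measurableSet_T n) fun t _ => hFour (arg lam t)
    _ = ∫ x, (∫ t in T n, Complex.exp (I * (x : ℂ) * ((arg lam t : ℝ) : ℂ)) * ρ x) ∂μ :=
        hswap.symm
    _ = ∫ x, (∫ t in T n, Complex.exp (I * (x : ℂ) * ((arg lam t : ℝ) : ℂ))) * ρ x ∂μ := by
        refine integral_congr_ae (Filter.Eventually.of_forall fun x => ?_)
        dsimp only
        rw [integral_mul_const]
    _ = ∫ x, (∫ t in T n, ∏ j : Fin (n + 1), Complex.exp
          (I * ((Fin.cons (1 - ∑ i, t i) t : Fin (n + 1) → ℝ) j : ℂ) * (x : ℂ) * (lam j : ℂ)))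
          * ρ x ∂μ := by
        refine integral_congr_ae (Filter.Eventually.of_forall fun x => ?_)
        dsimp only
        congr 1
        refine setIntegral_congr_fun (measurableSet_T n) fun t _ => ?_
        exact (hprod t x).symm
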